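/- In G(m, 1, n), the reflection length of an element g equals n minus the number of cycles of g of weight 0; that is, ℓ_R(g) = n − #{cycles C of g whose total weight is 0 in ℤ/mℤ}. -/

import Mathlib

/-- The wreath product `(ℤ/mℤ) ≀ S_n`, i.e. the group `G(m, 1, n)`: an element is a pair
`[u; (a_1, ..., a_n)]` of a permutation `u ∈ S_n` and a weight vector in `(ℤ/mℤ)^n`. -/
structure WP (m n : ℕ) where
  perm : Equiv.Perm (Fin n)
  wt : Fin n → ZMod m

namespace WP

variable {m n : ℕ}

theorem ext' {g h : WP m n} (h1 : g.perm = h.perm) (h2 : ∀ i, g.wt i = h.wt i) : g = h := by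
  cases g; cases h
  simp only [mk.injEq]
  exact ⟨h1, funext h2⟩

instance : Mul (WP m n) :=
  ⟨fun g h => ⟨g.perm * h.perm, fun i => g.wt (h.perm i) + h.wt i⟩⟩

instance : One (WP m n) := ⟨⟨1, fun _ => 0⟩⟩

instance : Inv (WP m n) := ⟨fun g => ⟨g.perm⁻¹, fun i => -g.wt (g.perm⁻¹ i)⟩⟩

instance : Group (WP m n) where
  mul_assoc a b c := ext' (mul_assoc a.perm b.perm c.perm) (fun i => add_assoc _ _ _)
  one_mul a := ext' (one_mul a.perm) (fun i => zero_add _)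
  mul_one a := ext' (mul_one a.perm) (fun i => add_zero _)
  inv_mul_cancel a := ext' (inv_mul_cancel a.perm) (fun i => by
    show -a.wt (a.perm⁻¹ (a.perm i)) + a.wt i = 0
    simp)

end WP

/-- A reflection in `G(m,1,n)`: either a transposition-like reflection `[(i j); a]`
(underlying transposition `(i j)`, weight `a` at `i` and `−a` at `j`, `0` elsewhere), or a
diagonal reflection (identity underlying permutation, a single nonzero weight). -/
def IsReflection {m n : ℕ} (t : WP m n) : Prop :=
  (∃ i j : Fin n, i ≠ j ∧ t.perm = Equiv.swap i j ∧
      t.wt j = -t.wt i ∧ ∀ k, k ≠ i → k ≠ j → t.wt k = 0) ∨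
  (t.perm = 1 ∧ ∃ i : Fin n, t.wt i ≠ 0 ∧ ∀ k, k ≠ i → t.wt k = 0)

section Auxiliary
open Equiv Equiv.Perm Finset Module

variable {m n : ℕ}

lemma pow_succ_apply (τ : Perm (Fin n)) (j : ℕ) (k : Fin n) :
    (τ ^ (j + 1)) k = τ ((τ ^ j) k) := by
  rw [pow_succ', Equiv.Perm.mul_apply]

lemma sameCycle_iff_exists_pow {σ : Perm (Fin n)} {x y : Fin n} :
    σ.SameCycle x y ↔ ∃ i : ℕ, (σ ^ i) x = y := by
  constructor
  · intro h
    obtain ⟨i, -, hi⟩ := h.exists_pow_eq'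
    exact ⟨i, hi⟩
  · rintro ⟨i, hi⟩
    exact ⟨(i : ℤ), by rwa [zpow_natCast]⟩

lemma sameCycle_fixed {σ : Perm (Fin n)} {y l : Fin n} (h : σ y = y) :
    σ.SameCycle y l ↔ l = y := by
  constructor
  · rintro ⟨i, hi⟩
    rw [Equiv.Perm.zpow_apply_eq_self_of_apply_eq_self h] at hi
    exact hi.symm
  · rintro rfl; exact Equiv.Perm.SameCycle.refl _ _

lemma step_fwd {σ : Perm (Fin n)} {x y : Fin n} (hxy : σ x = y) :
    ∀ (j : ℕ) (k : Fin n), ∃ i : ℕ, ((σ * Equiv.swap x y) ^ j) k = (σ ^ i) k := by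
  intro j k
  induction j with
  | zero => exact ⟨0, rfl⟩
  | succ j ih =>
    obtain ⟨i, hi⟩ := ih
    rw [pow_succ_apply, hi]
    set z := (σ ^ i) k with hz
    by_cases h1 : z = x
    · refine ⟨i + 2, ?_⟩
      rw [Equiv.Perm.mul_apply, h1, Equiv.swap_apply_left, ← hxy, ← h1,
        show i + 2 = (i + 1) + 1 by rfl, pow_succ_apply, pow_succ_apply]
    · by_cases h2 : z = y
      · refine ⟨i, ?_⟩
        rw [Equiv.Perm.mul_apply, h2, Equiv.swap_apply_right, hxy, ← h2]
      · refine ⟨i + 1, ?_⟩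
        rw [Equiv.Perm.mul_apply, Equiv.swap_apply_of_ne_of_ne h1 h2, pow_succ_apply]

lemma step_bwd {σ : Perm (Fin n)} {x y : Fin n} (hxy : σ x = y) (hne : x ≠ y) :
    ∀ (j : ℕ) (k : Fin n), k ≠ y → (σ ^ j) k ≠ y →
      ∃ i : ℕ, ((σ * Equiv.swap x y) ^ i) k = (σ ^ j) k := by
  intro j
  induction j using Nat.strong_induction_on with
  | _ j IH =>
    intro k hk hjk
    match j with
    | 0 => exact ⟨0, rfl⟩
    | (j + 1) =>
      by_cases hmid : (σ ^ j) k = y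
      · match j, hmid with
        | 0, hmid => exact absurd hmid hk
        | (j + 1), hmid =>
          have hx : (σ ^ j) k = x := by
            apply σ.injective
            rw [hxy, ← pow_succ_apply, hmid]
          obtain ⟨i, hi⟩ := IH j (by omega) k hk (by rw [hx]; exact hne)
          refine ⟨i + 1, ?_⟩
          rw [pow_succ_apply, hi, hx, Equiv.Perm.mul_apply, Equiv.swap_apply_left,
            pow_succ_apply, pow_succ_apply, hx, hxy]
      · obtain ⟨i, hi⟩ := IH j (by omega) k hk hmid
        have hxne : (σ ^ j) k ≠ x := by
          intro h
          apply hjk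
          rw [pow_succ_apply, h, hxy]
        refine ⟨i + 1, ?_⟩
        rw [pow_succ_apply, hi, Equiv.Perm.mul_apply,
          Equiv.swap_apply_of_ne_of_ne hxne hmid, pow_succ_apply]

lemma sameCycle_mul_swap_iff {σ : Perm (Fin n)} {x y k l : Fin n} (hxy : σ x = y) (hne : x ≠ y)
    (hk : k ≠ y) (hl : l ≠ y) :
    (σ * Equiv.swap x y).SameCycle k l ↔ σ.SameCycle k l := by
  constructor
  · intro h
    rw [sameCycle_iff_exists_pow] at h ⊢
    obtain ⟨j, hj⟩ := h
    obtain ⟨i, hi⟩ := step_fwd hxy j k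
    exact ⟨i, by rw [← hi, hj]⟩
  · intro h
    rw [sameCycle_iff_exists_pow] at h ⊢
    obtain ⟨j, hj⟩ := h
    obtain ⟨i, hi⟩ := step_bwd hxy hne j k hk (by rwa [hj])
    exact ⟨i, by rw [hi, hj]⟩

lemma mul_swap_fixed {σ : Perm (Fin n)} {x y : Fin n} (hxy : σ x = y) :
    (σ * Equiv.swap x y) y = y := by
  rw [Equiv.Perm.mul_apply, Equiv.swap_apply_right, hxy]

lemma sameCycle_iff_exists_pow' {σ : Perm (Fin n)} {x y : Fin n} :
    σ.SameCycle x y ↔ ∃ i : ℕ, (σ ^ i) x = y := by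
  constructor
  · intro h
    obtain ⟨i, -, hi⟩ := h.exists_pow_eq'
    exact ⟨i, hi⟩
  · rintro ⟨i, hi⟩
    exact ⟨(i : ℤ), by rwa [zpow_natCast]⟩

lemma perm_pow_apply_eq_iterate (σ : Perm (Fin n)) (t : ℕ) (x : Fin n) :
    (σ ^ t) x = (⇑σ)^[t] x := by
  rw [← Equiv.Perm.iterate_eq_pow]

lemma mem_periodicPts (σ : Perm (Fin n)) (x : Fin n) : x ∈ Function.periodicPts σ := by
  refine ⟨orderOf σ, orderOf_pos σ, ?_⟩
  show (⇑σ)^[orderOf σ] x = x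
  rw [← perm_pow_apply_eq_iterate, pow_orderOf_eq_one]
  rfl

lemma minPeriod_pos (σ : Perm (Fin n)) (x : Fin n) : 0 < Function.minimalPeriod σ x :=
  Function.minimalPeriod_pos_of_mem_periodicPts (mem_periodicPts σ x)

lemma pow_minPeriod_apply (σ : Perm (Fin n)) (x : Fin n) :
    (σ ^ Function.minimalPeriod σ x) x = x := by
  rw [perm_pow_apply_eq_iterate]
  exact Function.iterate_minimalPeriod

open scoped Classical in
lemma cyc_sum_eq {σ : Perm (Fin n)} (x : Fin n) (w : Fin n → ZMod m) :
    ∑ l ∈ univ.filter (fun y => σ.SameCycle x y), w l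
      = ∑ t ∈ Finset.range (Function.minimalPeriod σ x), w ((σ ^ t) x) := by
  refine (Finset.sum_bij (fun t _ => (σ ^ t) x) ?_ ?_ ?_ ?_).symm
  · intro t ht
    simp only [mem_filter, mem_univ, true_and]
    exact ⟨(t : ℤ), by rw [zpow_natCast]⟩
  · intro s hs t ht hst
    have := Function.iterate_injOn_Iio_minimalPeriod (f := ⇑σ) (x := x)
      (by simpa using Finset.mem_range.mp hs) (by simpa using Finset.mem_range.mp ht)
    rw [perm_pow_apply_eq_iterate, perm_pow_apply_eq_iterate] at hst
    exact this hst
  · intro l hl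
    simp only [mem_filter, mem_univ, true_and] at hl
    obtain ⟨i, hi⟩ := sameCycle_iff_exists_pow'.mp hl
    refine ⟨i % Function.minimalPeriod σ x,
      Finset.mem_range.mpr (Nat.mod_lt _ (minPeriod_pos σ x)), ?_⟩
    rw [perm_pow_apply_eq_iterate, Function.iterate_mod_minimalPeriod_eq, ← perm_pow_apply_eq_iterate, hi]
  · intro t ht; rfl

-- roots of unity helpers
lemma pow_val_mod {ζ : ℂ} (hone : ζ ^ m = 1) (x : ℕ) : ζ ^ (x % m) = ζ ^ x := by
  conv_rhs => rw [← Nat.mod_add_div x m, pow_add, pow_mul, hone, one_pow, mul_one]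

lemma pow_val_add {ζ : ℂ} (hm : 0 < m) (hone : ζ ^ m = 1) (a b : ZMod m) :
    ζ ^ (a + b).val = ζ ^ a.val * ζ ^ b.val := by
  haveI : NeZero m := ⟨hm.ne'⟩
  rw [← pow_add, ZMod.val_add, pow_val_mod hone]

lemma pow_val_zero {ζ : ℂ} (hm : 0 < m) : ζ ^ (0 : ZMod m).val = 1 := by
  haveI : NeZero m := ⟨hm.ne'⟩
  rw [ZMod.val_zero, pow_zero]

lemma pow_val_eq_one_iff {ζ : ℂ} (hm : 0 < m) (hζ : IsPrimitiveRoot ζ m) (a : ZMod m) :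
    ζ ^ a.val = 1 ↔ a = 0 := by
  haveI : NeZero m := ⟨hm.ne'⟩
  rw [hζ.pow_eq_one_iff_dvd, ← ZMod.val_eq_zero]
  exact ⟨fun h => Nat.eq_zero_of_dvd_of_lt h (ZMod.val_lt a), fun h => h ▸ dvd_zero m⟩

namespace WPL
open Equiv Equiv.Perm Finset Module

variable {m n : ℕ}

lemma mul_perm (g h : WP m n) : (g * h).perm = g.perm * h.perm := rfl
lemma mul_wt (g h : WP m n) (i : Fin n) : (g * h).wt i = g.wt (h.perm i) + h.wt i := rfl
lemma one_perm : (1 : WP m n).perm = 1 := rfl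
lemma one_wt (i : Fin n) : (1 : WP m n).wt i = 0 := rfl
lemma inv_perm (g : WP m n) : (g⁻¹).perm = g.perm⁻¹ := rfl
lemma inv_wt (g : WP m n) (i : Fin n) : (g⁻¹).wt i = -g.wt (g.perm⁻¹ i) := rfl

/-- The monomial representation of `WP m n` on `ℂⁿ`. -/
noncomputable def rho (ζ : ℂ) (g : WP m n) : (Fin n → ℂ) →ₗ[ℂ] (Fin n → ℂ) where
  toFun v := fun i => ζ ^ (g.wt (g.perm⁻¹ i)).val * v (g.perm⁻¹ i)
  map_add' u v := by funext i; simp [mul_add]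
  map_smul' c v := by funext i; simp [Pi.smul_apply, smul_eq_mul]; ring

lemma rho_apply (ζ : ℂ) (g : WP m n) (v : Fin n → ℂ) (i : Fin n) :
    rho ζ g v i = ζ ^ (g.wt (g.perm⁻¹ i)).val * v (g.perm⁻¹ i) := rfl

lemma rho_one (hm : 0 < m) (ζ : ℂ) : rho (m := m) (n := n) ζ 1 = LinearMap.id := by
  apply LinearMap.ext; intro v; funext i
  rw [rho_apply]
  show ζ ^ ((1 : WP m n).wt _).val * v ((1 : Equiv.Perm (Fin n))⁻¹ i) = v i
  rw [one_wt, pow_val_zero hm, inv_one, one_mul]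
  rfl

lemma rho_mul (hm : 0 < m) {ζ : ℂ} (hone : ζ ^ m = 1) (g h : WP m n) (v : Fin n → ℂ) :
    rho ζ (g * h) v = rho ζ g (rho ζ h v) := by
  funext i
  rw [rho_apply, rho_apply, rho_apply]
  have hperm : (g * h).perm⁻¹ i = h.perm⁻¹ (g.perm⁻¹ i) := by
    rw [mul_perm, mul_inv_rev]; rfl
  rw [hperm]
  have hwt : (g * h).wt (h.perm⁻¹ (g.perm⁻¹ i))
      = g.wt (g.perm⁻¹ i) + h.wt (h.perm⁻¹ (g.perm⁻¹ i)) := by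
    rw [mul_wt, show h.perm (h.perm⁻¹ (g.perm⁻¹ i)) = g.perm⁻¹ i from h.perm.apply_symm_apply _]
  rw [hwt, pow_val_add hm hone]
  ring

/-- Fixed space of `rho ζ g`. -/
noncomputable def fixS (ζ : ℂ) (g : WP m n) : Submodule ℂ (Fin n → ℂ) :=
  LinearMap.ker (rho ζ g - LinearMap.id)

lemma mem_fixS {ζ : ℂ} {g : WP m n} {v : Fin n → ℂ} :
    v ∈ fixS ζ g ↔ rho ζ g v = v := by
  rw [fixS, LinearMap.mem_ker, LinearMap.sub_apply, LinearMap.id_apply, sub_eq_zero]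

lemma fixS_inf_le (hm : 0 < m) {ζ : ℂ} (hone : ζ ^ m = 1) (g h : WP m n) :
    fixS ζ g ⊓ fixS ζ h ≤ fixS ζ (g * h) := by
  rintro v ⟨hg, hh⟩
  rw [SetLike.mem_coe, mem_fixS] at hg hh
  rw [mem_fixS, rho_mul hm hone, hh, hg]

lemma finrank_fixS_reflection (hm : 0 < m) {ζ : ℂ} (hone : ζ ^ m = 1) {t : WP m n}
    (ht : IsReflection t) : n ≤ finrank ℂ (fixS ζ t) + 1 := by
  have hrn : finrank ℂ (LinearMap.range (rho ζ t - LinearMap.id))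
      + finrank ℂ (fixS ζ t) = n := by
    rw [fixS, LinearMap.finrank_range_add_finrank_ker,
      Module.finrank_fintype_fun_eq_card, Fintype.card_fin]
  suffices hr : finrank ℂ (LinearMap.range (rho ζ t - LinearMap.id)) ≤ 1 by omega
  obtain ⟨d, hd⟩ : ∃ d : Fin n → ℂ, ∀ v : Fin n → ℂ,
      rho ζ t v - v ∈ Submodule.span ℂ {d} := by
    rcases ht with ⟨i, j, hij, hperm, hwtj, hwt0⟩ | ⟨hperm, i, hwi, hwt0⟩
    · set a := t.wt i with ha
      refine ⟨fun k => if k = i then -(ζ ^ ((-a).val)) else if k = j then 1 else 0,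
        fun v => ?_⟩
      rw [Submodule.mem_span_singleton]
      refine ⟨rho ζ t v j - v j, ?_⟩
      have hswap : t.perm⁻¹ = Equiv.swap i j := by rw [hperm, Equiv.swap_inv]
      have hone' : ζ ^ ((-a).val) * ζ ^ (a.val) = 1 := by
        rw [← pow_val_add hm hone, neg_add_cancel, pow_val_zero hm]
      have huj : rho ζ t v j - v j = ζ ^ (a.val) * v i - v j := by
        rw [rho_apply, hswap, Equiv.swap_apply_right, ← ha]
      symm
      funext k
      simp only [Pi.sub_apply, Pi.smul_apply, smul_eq_mul]
      by_cases hk1 : k = i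
      · rw [hk1, if_pos rfl, rho_apply, hswap, Equiv.swap_apply_left, hwtj, huj]
        linear_combination v i * hone'
      · by_cases hk2 : k = j
        · rw [hk2, if_neg hij.symm, if_pos rfl, mul_one]
        · rw [if_neg hk1, if_neg hk2, mul_zero, rho_apply, hswap,
            Equiv.swap_apply_of_ne_of_ne hk1 hk2, hwt0 k hk1 hk2, pow_val_zero hm, one_mul,
            sub_self]
    · refine ⟨fun k => if k = i then 1 else 0, fun v => ?_⟩
      rw [Submodule.mem_span_singleton]
      refine ⟨rho ζ t v i - v i, ?_⟩
      have hswap : t.perm⁻¹ = 1 := by rw [hperm, inv_one]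
      symm
      funext k
      simp only [Pi.sub_apply, Pi.smul_apply, smul_eq_mul]
      by_cases hk : k = i
      · rw [hk, if_pos rfl, mul_one]
      · rw [if_neg hk, mul_zero, rho_apply, hswap]
        show ζ ^ (t.wt ((1 : Equiv.Perm (Fin n)) k)).val * v ((1 : Equiv.Perm (Fin n)) k)
            - v k = 0
        rw [Equiv.Perm.one_apply, hwt0 k hk, pow_val_zero hm, one_mul, sub_self]
  have hle : LinearMap.range (rho ζ t - LinearMap.id) ≤ Submodule.span ℂ {d} := by
    rintro u ⟨v, rfl⟩
    rw [LinearMap.sub_apply, LinearMap.id_apply]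
    exact hd v
  calc finrank ℂ (LinearMap.range (rho ζ t - LinearMap.id))
      ≤ finrank ℂ (Submodule.span ℂ {d}) := Submodule.finrank_mono hle
    _ ≤ 1 := by
        have := finrank_span_le_card (R := ℂ) (M := Fin n → ℂ) {d}
        simpa using this


lemma lower_list (hm : 0 < m) {ζ : ℂ} (hone : ζ ^ m = 1) :
    ∀ L : List (WP m n), (∀ t ∈ L, IsReflection t) →
      n ≤ finrank ℂ (fixS ζ L.prod) + L.length := by
  intro L
  induction L with
  | nil =>
    intro _
    rw [List.prod_nil, List.length_nil, add_zero]
    have h1 : fixS (m := m) ζ (1 : WP m n) = ⊤ := by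
      rw [fixS, rho_one hm, sub_self]
      exact LinearMap.ker_zero
    rw [h1, finrank_top, Module.finrank_fintype_fun_eq_card, Fintype.card_fin]
  | cons t L ih =>
    intro h
    have hA := finrank_fixS_reflection hm hone (h t (List.mem_cons_self))
    have hB := ih (fun s hs => h s (List.mem_cons_of_mem t hs))
    have hsub : fixS ζ t ⊓ fixS ζ L.prod ≤ fixS ζ ((t :: L).prod) := by
      rw [List.prod_cons]; exact fixS_inf_le hm hone _ _
    have h1 : finrank ℂ ((fixS ζ t ⊓ fixS ζ L.prod : Submodule ℂ (Fin n → ℂ)))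
        ≤ finrank ℂ (fixS ζ ((t :: L).prod)) := Submodule.finrank_mono hsub
    have hdim := Submodule.finrank_sup_add_finrank_inf_eq (fixS ζ t) (fixS ζ L.prod)
    have h2 : finrank ℂ ((fixS ζ t ⊔ fixS ζ L.prod : Submodule ℂ (Fin n → ℂ))) ≤ n := by
      have := Submodule.finrank_le (fixS ζ t ⊔ fixS ζ L.prod)
      rwa [Module.finrank_fintype_fun_eq_card, Fintype.card_fin] at this
    rw [List.length_cons]
    omega

open scoped Classical in
noncomputable def nuSet (g : WP m n) : Finset (Fin n) :=
  Finset.univ.filter (fun x : Fin n =>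
    (∀ y : Fin n, g.perm.SameCycle x y → x ≤ y) ∧
    (∑ y ∈ Finset.univ.filter (fun y : Fin n => g.perm.SameCycle x y), g.wt y) = 0)

open scoped Classical in
lemma mem_nuSet {g : WP m n} {x : Fin n} :
    x ∈ nuSet g ↔ (∀ y : Fin n, g.perm.SameCycle x y → x ≤ y) ∧
      (∑ y ∈ Finset.univ.filter (fun y : Fin n => g.perm.SameCycle x y), g.wt y) = 0 := by
  rw [nuSet]
  simp only [Finset.mem_filter, Finset.mem_univ, true_and]

lemma fixed_prop (hm : 0 < m) {ζ : ℂ} (hone : ζ ^ m = 1) {g : WP m n} {v : Fin n → ℂ}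
    (hv : rho ζ g v = v) (x : Fin n) :
    ∀ t : ℕ, v ((g.perm ^ t) x)
      = ζ ^ (∑ s ∈ Finset.range t, g.wt ((g.perm ^ s) x)).val * v x := by
  have key : ∀ z, v (g.perm z) = ζ ^ (g.wt z).val * v z := by
    intro z
    have h1 := congrFun hv (g.perm z)
    rw [rho_apply, show g.perm⁻¹ (g.perm z) = z from g.perm.symm_apply_apply z] at h1
    exact h1.symm
  intro t
  induction t with
  | zero =>
    rw [pow_zero, Finset.range_zero, Finset.sum_empty, pow_val_zero hm, one_mul]
    rfl
  | succ t ih =>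
    rw [pow_succ_apply, key, ih, Finset.sum_range_succ, add_comm, pow_val_add hm hone]
    ring

open scoped Classical in
lemma fixed_vanish (hm : 0 < m) {ζ : ℂ} (hζ : IsPrimitiveRoot ζ m) {g : WP m n}
    {v : Fin n → ℂ} (hv : rho ζ g v = v) (h0 : ∀ x ∈ nuSet g, v x = 0) : v = 0 := by
  have hone : ζ ^ m = 1 := hζ.pow_eq_one
  funext k
  set σ := g.perm with hσ
  have hkmem : k ∈ Finset.univ.filter (fun y => σ.SameCycle k y) := by
    simp only [Finset.mem_filter, Finset.mem_univ, true_and]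
    exact Equiv.Perm.SameCycle.refl _ _
  have hne : (Finset.univ.filter (fun y => σ.SameCycle k y)).Nonempty := ⟨k, hkmem⟩
  set x := (Finset.univ.filter (fun y => σ.SameCycle k y)).min' hne with hx
  have hxk : σ.SameCycle k x := by
    have h1 := (Finset.univ.filter (fun y => σ.SameCycle k y)).min'_mem hne
    rw [Finset.mem_filter] at h1
    exact h1.2
  have hmin : ∀ y, σ.SameCycle x y → x ≤ y := by
    intro y hy
    exact Finset.min'_le _ y (Finset.mem_filter.mpr ⟨Finset.mem_univ _, hxk.trans hy⟩)
  have hvx : v x = 0 := by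
    by_cases hw : (∑ y ∈ Finset.univ.filter (fun y : Fin n => σ.SameCycle x y), g.wt y) = 0
    · exact h0 x (mem_nuSet.mpr ⟨hmin, hw⟩)
    · have hper := fixed_prop hm hone hv x (Function.minimalPeriod σ x)
      rw [pow_minPeriod_apply, ← cyc_sum_eq x g.wt] at hper
      have hz1 : ζ ^ (∑ y ∈ Finset.univ.filter (fun y : Fin n => σ.SameCycle x y),
          g.wt y).val ≠ 1 := by
        intro h1
        exact hw ((pow_val_eq_one_iff hm hζ _).mp h1)
      have h2 : (ζ ^ (∑ y ∈ Finset.univ.filter (fun y : Fin n => σ.SameCycle x y),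
          g.wt y).val - 1) * v x = 0 := by
        rw [sub_mul, one_mul, ← hper, sub_self]
      rcases mul_eq_zero.mp h2 with h3 | h3
      · exact absurd (by linear_combination h3) hz1
      · exact h3
  obtain ⟨t, ht⟩ := sameCycle_iff_exists_pow'.mp hxk.symm
  have h4 := fixed_prop hm hone hv x t
  rw [ht, hvx, mul_zero] at h4
  exact h4

open scoped Classical in
lemma finrank_fixS_le (hm : 0 < m) {ζ : ℂ} (hζ : IsPrimitiveRoot ζ m) (g : WP m n) :
    finrank ℂ (fixS ζ g) ≤ (nuSet g).card := by
  let E : fixS ζ g →ₗ[ℂ] ({ x // x ∈ nuSet g } → ℂ) :=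
    { toFun := fun v x => (v : Fin n → ℂ) x.1
      map_add' := fun u v => rfl
      map_smul' := fun c v => rfl }
  have hinj : Function.Injective E := by
    intro u v huv
    apply Subtype.ext
    have hw : rho ζ g ((u : Fin n → ℂ) - (v : Fin n → ℂ))
        = (u : Fin n → ℂ) - (v : Fin n → ℂ) := by
      rw [map_sub, mem_fixS.mp u.2, mem_fixS.mp v.2]
    have h0 : ∀ x ∈ nuSet g, ((u : Fin n → ℂ) - (v : Fin n → ℂ)) x = 0 := by
      intro x hx
      have h5 : (u : Fin n → ℂ) x = (v : Fin n → ℂ) x := congrFun huv ⟨x, hx⟩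
      rw [Pi.sub_apply, h5, sub_self]
    have := fixed_vanish hm hζ hw h0
    have := sub_eq_zero.mp this
    exact this
  have hfr := LinearMap.finrank_le_finrank_of_injective hinj
  rwa [Module.finrank_fintype_fun_eq_card, Fintype.card_coe] at hfr



lemma isReflection_inv {t : WP m n} (ht : IsReflection t) : IsReflection t⁻¹ := by
  rcases ht with ⟨i, j, hij, hperm, hwtj, h0⟩ | ⟨hperm, i, hwi, h0⟩
  · left
    have hswap : t.perm⁻¹ = Equiv.swap i j := by rw [hperm, Equiv.swap_inv]
    refine ⟨i, j, hij, ?_, ?_, ?_⟩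
    · show t.perm⁻¹ = Equiv.swap i j
      exact hswap
    · show -t.wt (t.perm⁻¹ j) = -(-t.wt (t.perm⁻¹ i))
      rw [hswap, Equiv.swap_apply_right, Equiv.swap_apply_left, hwtj, neg_neg]
    · intro k hk1 hk2
      show -t.wt (t.perm⁻¹ k) = 0
      rw [hswap, Equiv.swap_apply_of_ne_of_ne hk1 hk2, h0 k hk1 hk2, neg_zero]
  · right
    have hswap : t.perm⁻¹ = 1 := by rw [hperm, inv_one]
    refine ⟨?_, i, ?_, ?_⟩
    · show t.perm⁻¹ = 1
      exact hswap
    · show -t.wt (t.perm⁻¹ i) ≠ 0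
      rw [hswap, Equiv.Perm.one_apply]
      exact neg_ne_zero.mpr hwi
    · intro k hk
      show -t.wt (t.perm⁻¹ k) = 0
      rw [hswap, Equiv.Perm.one_apply, h0 k hk, neg_zero]

open scoped Classical in
lemma exists_step (g : WP m n) (hcard : (nuSet g).card < n) :
    ∃ t : WP m n, IsReflection t ∧ (nuSet g).card < (nuSet (g * t)).card := by
  by_cases hσ : g.perm = 1
  · -- diagonal case
    have hsc : ∀ a b : Fin n, g.perm.SameCycle a b ↔ a = b := by
      intro a b; rw [hσ]; exact Equiv.Perm.sameCycle_one
    have hcycset : ∀ a : Fin n,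
        Finset.univ.filter (fun y : Fin n => g.perm.SameCycle a y) = {a} := by
      intro a
      ext l
      simp only [Finset.mem_filter, Finset.mem_univ, true_and, Finset.mem_singleton, hsc]
      exact eq_comm
    have hmem : ∀ a : Fin n, a ∈ nuSet g ↔ g.wt a = 0 := by
      intro a
      rw [mem_nuSet, hcycset a, Finset.sum_singleton]
      constructor
      · exact fun h => h.2
      · intro h
        exact ⟨fun y hy => le_of_eq ((hsc a y).mp hy), h⟩
    obtain ⟨x, hx⟩ : ∃ x : Fin n, g.wt x ≠ 0 := by
      by_contra hall
      push_neg at hall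
      have : nuSet g = Finset.univ := Finset.eq_univ_of_forall (fun a => (hmem a).mpr (hall a))
      rw [this, Finset.card_univ, Fintype.card_fin] at hcard
      omega
    refine ⟨⟨1, fun k => if k = x then -g.wt x else 0⟩, Or.inr ⟨rfl, x, ?_, ?_⟩, ?_⟩
    · show (if x = x then -g.wt x else 0) ≠ 0
      rw [if_pos rfl]
      exact neg_ne_zero.mpr hx
    · intro k hk
      show (if k = x then -g.wt x else 0) = 0
      rw [if_neg hk]
    · set t : WP m n := ⟨1, fun k => if k = x then -g.wt x else 0⟩ with hts
      have hp' : (g * t).perm = g.perm := by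
        rw [mul_perm]
        show g.perm * 1 = g.perm
        rw [mul_one]
      have hw' : ∀ k, (g * t).wt k = g.wt k + (if k = x then -g.wt x else 0) := by
        intro k
        rw [mul_wt]
        rfl
      have hsc2 : ∀ a b : Fin n, (g * t).perm.SameCycle a b ↔ a = b := by
        intro a b; rw [hp']; exact hsc a b
      have hcycset2 : ∀ a : Fin n,
          Finset.univ.filter (fun y : Fin n => (g * t).perm.SameCycle a y) = {a} := by
        intro a
        ext l
        simp only [Finset.mem_filter, Finset.mem_univ, true_and, Finset.mem_singleton, hsc2]
        exact eq_comm
      have hmem2 : ∀ a : Fin n, a ∈ nuSet (g * t) ↔ (g * t).wt a = 0 := by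
        intro a
        rw [mem_nuSet, hcycset2 a, Finset.sum_singleton]
        constructor
        · exact fun h => h.2
        · intro h
          exact ⟨fun y hy => le_of_eq ((hsc2 a y).mp hy), h⟩
      apply Finset.card_lt_card
      rw [Finset.ssubset_iff_of_subset]
      · refine ⟨x, ?_, ?_⟩
        · rw [hmem2, hw' x, if_pos rfl, add_neg_cancel]
        · rw [hmem]; exact hx
      · intro a ha
        rw [hmem] at ha
        rw [hmem2, hw' a]
        have hax : a ≠ x := fun h => hx (h ▸ ha)
        rw [if_neg hax, ha, add_zero]
  · -- swap case
    obtain ⟨z, hz⟩ : ∃ z : Fin n, g.perm z ≠ z := by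
      by_contra hall
      push_neg at hall
      exact hσ (Equiv.ext hall)
    set σ := g.perm with hσdef
    have hzmem : z ∈ Finset.univ.filter (fun y : Fin n => σ.SameCycle z y) := by
      simp only [Finset.mem_filter, Finset.mem_univ, true_and]
      exact Equiv.Perm.SameCycle.refl _ _
    have hne : (Finset.univ.filter (fun y : Fin n => σ.SameCycle z y)).Nonempty := ⟨z, hzmem⟩
    set x0 := (Finset.univ.filter (fun y : Fin n => σ.SameCycle z y)).min' hne with hx0
    have hzx0 : σ.SameCycle z x0 := by
      have h1 := (Finset.univ.filter (fun y : Fin n => σ.SameCycle z y)).min'_mem hne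
      rw [Finset.mem_filter] at h1
      exact h1.2
    have hx0le : ∀ l, σ.SameCycle z l → x0 ≤ l := by
      intro l hl
      exact Finset.min'_le _ l (Finset.mem_filter.mpr ⟨Finset.mem_univ _, hl⟩)
    -- choose y in the cycle of z, not the min, not fixed
    set y := if z = x0 then σ z else z with hy
    have hzy : σ.SameCycle z y := by
      rw [hy]
      split
      · exact ⟨1, by rw [zpow_one]⟩
      · exact Equiv.Perm.SameCycle.refl _ _
    have hyfix : σ y ≠ y := by
      rw [hy]
      split
      · intro h
        exact hz (σ.injective h)
      · exact hz
    have hyx0 : y ≠ x0 := by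
      rw [hy]
      by_cases hzc : z = x0
      · rw [if_pos hzc]
        intro h
        rw [← hzc] at h
        exact hz h
      · rw [if_neg hzc]
        exact hzc
    set x := σ⁻¹ y with hxd
    have hxy : σ x = y := σ.apply_symm_apply y
    have hx_ne_y : x ≠ y := by
      intro h
      apply hyfix
      rw [← h, hxy]
      exact h.symm
    have hsyx : σ.SameCycle y x := ⟨-1, by rw [zpow_neg_one]⟩
    have hzx : σ.SameCycle z x := hzy.trans hsyx
    refine ⟨⟨Equiv.swap x y, fun k => if k = x then g.wt x else if k = y then -g.wt x else 0⟩,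
      Or.inl ⟨x, y, hx_ne_y, rfl, ?_, ?_⟩, ?_⟩
    · show (if y = x then g.wt x else if y = y then -g.wt x else 0)
        = -(if x = x then g.wt x else if x = y then -g.wt x else 0)
      rw [if_neg (Ne.symm hx_ne_y), if_pos rfl, if_pos rfl]
    · intro k hk1 hk2
      show (if k = x then g.wt x else if k = y then -g.wt x else 0) = 0
      rw [if_neg hk1, if_neg hk2]
    · set t : WP m n :=
        ⟨Equiv.swap x y, fun k => if k = x then g.wt x else if k = y then -g.wt x else 0⟩
        with hts
      have hp' : (g * t).perm = σ * Equiv.swap x y := rfl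
      have hfix' : (g * t).perm y = y := by rw [hp']; exact mul_swap_fixed hxy
      have hw'x : (g * t).wt x = g.wt y + g.wt x := by
        rw [mul_wt]
        show g.wt (Equiv.swap x y x) + (if x = x then g.wt x else _) = _
        rw [Equiv.swap_apply_left, if_pos rfl]
      have hw'y : (g * t).wt y = 0 := by
        rw [mul_wt]
        show g.wt (Equiv.swap x y y)
          + (if y = x then g.wt x else if y = y then -g.wt x else 0) = 0
        rw [Equiv.swap_apply_right, if_neg (Ne.symm hx_ne_y), if_pos rfl, add_neg_cancel]
      have hw'k : ∀ k, k ≠ x → k ≠ y → (g * t).wt k = g.wt k := by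
        intro k hk1 hk2
        rw [mul_wt]
        show g.wt (Equiv.swap x y k) + (if k = x then _ else if k = y then _ else 0) = _
        rw [Equiv.swap_apply_of_ne_of_ne hk1 hk2, if_neg hk1, if_neg hk2, add_zero]
      have hsc' : ∀ k l : Fin n, k ≠ y → l ≠ y →
          ((g * t).perm.SameCycle k l ↔ σ.SameCycle k l) := by
        intro k l hk hl
        rw [hp']
        exact sameCycle_mul_swap_iff hxy hx_ne_y hk hl
      have hscy : ∀ l, (g * t).perm.SameCycle y l ↔ l = y := fun l => sameCycle_fixed hfix'
      have hsub : nuSet g ⊆ nuSet (g * t) := by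
        intro k hk
        rw [mem_nuSet] at hk
        obtain ⟨hkmin, hksum⟩ := hk
        have hky : k ≠ y := by
          intro h
          have h1 : k ≤ x0 := hkmin x0 (by rw [h]; exact hzy.symm.trans hzx0)
          have h2 : x0 ≤ k := hx0le k (by rw [h]; exact hzy)
          exact hyx0 (le_antisymm (h ▸ h1) (h ▸ h2))
        have hmin' : ∀ l, (g * t).perm.SameCycle k l → k ≤ l := by
          intro l hl
          by_cases hly : l = y
          · subst hly
            exact absurd ((hscy k).mp hl.symm) hky
          · exact hkmin l ((hsc' k l hky hly).mp hl)
        rw [mem_nuSet]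
        refine ⟨hmin', ?_⟩
        by_cases hkz : σ.SameCycle z k
        · -- k is the min of the cycle containing x, y
          have hky' : σ.SameCycle k y := hkz.symm.trans hzy
          have hkx : σ.SameCycle k x := hkz.symm.trans hzx
          have hfeq : Finset.univ.filter (fun l : Fin n => (g * t).perm.SameCycle k l)
              = (Finset.univ.filter (fun l : Fin n => σ.SameCycle k l)).erase y := by
            ext l
            simp only [Finset.mem_filter, Finset.mem_univ, true_and, Finset.mem_erase]
            constructor
            · intro h
              have hly : l ≠ y := by
                intro h2
                subst h2
                exact hky ((hscy k).mp h.symm)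
              exact ⟨hly, (hsc' k l hky hly).mp h⟩
            · intro ⟨hly, h⟩
              exact (hsc' k l hky hly).mpr h
          rw [hfeq]
          have hymem : y ∈ Finset.univ.filter (fun l : Fin n => σ.SameCycle k l) := by
            simp only [Finset.mem_filter, Finset.mem_univ, true_and]; exact hky'
          have hxmem : x ∈ (Finset.univ.filter (fun l : Fin n => σ.SameCycle k l)).erase y := by
            simp only [Finset.mem_erase, Finset.mem_filter, Finset.mem_univ, true_and]
            exact ⟨hx_ne_y, hkx⟩
          rw [← Finset.add_sum_erase _ _ hxmem, hw'x]
          have hrest : ∀ l ∈ ((Finset.univ.filter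
              (fun l : Fin n => σ.SameCycle k l)).erase y).erase x,
              (g * t).wt l = g.wt l := by
            intro l hl
            simp only [Finset.mem_erase] at hl
            exact hw'k l hl.1 hl.2.1
          rw [Finset.sum_congr rfl hrest]
          have hsplit : ∑ l ∈ Finset.univ.filter (fun l : Fin n => σ.SameCycle k l), g.wt l
              = g.wt y + (g.wt x + ∑ l ∈ ((Finset.univ.filter
                (fun l : Fin n => σ.SameCycle k l)).erase y).erase x, g.wt l) := by
            rw [Finset.add_sum_erase _ _ hxmem, Finset.add_sum_erase _ _ hymem]
          rw [hksum] at hsplit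
          rw [← add_assoc] at hsplit
          exact hsplit.symm
        · -- cycle of k untouched
          have hnkx : ¬σ.SameCycle k x := fun h => hkz ((h.trans hzx.symm).symm)
          have hnky : ¬σ.SameCycle k y := fun h => hkz ((h.trans hzy.symm).symm)
          have hfeq : Finset.univ.filter (fun l : Fin n => (g * t).perm.SameCycle k l)
              = Finset.univ.filter (fun l : Fin n => σ.SameCycle k l) := by
            ext l
            simp only [Finset.mem_filter, Finset.mem_univ, true_and]
            by_cases hly : l = y
            · subst hly
              constructor
              · intro h
                exact absurd ((hscy k).mp h.symm) hky
              · intro h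
                exact absurd h hnky
            · exact hsc' k l hky hly
          rw [hfeq, ← hksum]
          apply Finset.sum_congr rfl
          intro l hl
          simp only [Finset.mem_filter, Finset.mem_univ, true_and] at hl
          have hlx : l ≠ x := fun h => hnkx (h ▸ hl)
          have hly : l ≠ y := fun h => hnky (h ▸ hl)
          exact hw'k l hlx hly
      have hymem' : y ∈ nuSet (g * t) := by
        rw [mem_nuSet]
        constructor
        · intro l hl
          rw [(hscy l).mp hl]
        · have hfy : Finset.univ.filter (fun l : Fin n => (g * t).perm.SameCycle y l)
              = {y} := by
            ext l
            simp only [Finset.mem_filter, Finset.mem_univ, true_and, Finset.mem_singleton]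
            exact hscy l
          rw [hfy, Finset.sum_singleton, hw'y]
      have hynot : y ∉ nuSet g := by
        rw [mem_nuSet]
        intro ⟨hmin, _⟩
        have h1 : y ≤ x0 := hmin x0 (hzy.symm.trans hzx0)
        exact hyx0 (le_antisymm h1 (hx0le y hzy))
      apply Finset.card_lt_card
      rw [Finset.ssubset_iff_of_subset hsub]
      exact ⟨y, hymem', hynot⟩

open scoped Classical in
lemma upper_bound : ∀ (k : ℕ) (g : WP m n), n - (nuSet g).card ≤ k →
    ∃ L : List (WP m n), (∀ t ∈ L, IsReflection t) ∧ L.prod = g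
      ∧ L.length + (nuSet g).card ≤ n := by
  intro k
  induction k with
  | zero =>
    intro g hg
    have hle : (nuSet g).card ≤ n := by
      have := Finset.card_le_univ (nuSet g)
      simpa using this
    have hcard : (nuSet g).card = n := by omega
    have huniv : nuSet g = Finset.univ :=
      Finset.eq_univ_of_card _ (by rw [hcard, Fintype.card_fin])
    have hprops : ∀ a : Fin n, (∀ y : Fin n, g.perm.SameCycle a y → a ≤ y) ∧
        (∑ y ∈ Finset.univ.filter (fun y : Fin n => g.perm.SameCycle a y), g.wt y) = 0 :=
      fun a => mem_nuSet.mp (huniv ▸ Finset.mem_univ a)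
    have hσ : g.perm = 1 := by
      apply Equiv.ext
      intro a
      have h1 : a ≤ g.perm a := (hprops a).1 (g.perm a) ⟨1, by rw [zpow_one]⟩
      have h2 : g.perm a ≤ a :=
        (hprops (g.perm a)).1 a (Equiv.Perm.SameCycle.symm ⟨1, by rw [zpow_one]⟩)
      exact le_antisymm h2 h1
    have hwt : ∀ a : Fin n, g.wt a = 0 := by
      intro a
      have h1 := (hprops a).2
      have hcyc : Finset.univ.filter (fun y : Fin n => g.perm.SameCycle a y) = {a} := by
        ext l
        simp only [Finset.mem_filter, Finset.mem_univ, true_and, Finset.mem_singleton, hσ,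
          Equiv.Perm.sameCycle_one]
        exact eq_comm
      rwa [hcyc, Finset.sum_singleton] at h1
    have hg1 : g = 1 := WP.ext' hσ hwt
    refine ⟨[], ?_, ?_, ?_⟩
    · intro t ht
      cases ht
    · rw [List.prod_nil, hg1]
    · rw [List.length_nil, hcard, zero_add]
  | succ k ih =>
    intro g hg
    by_cases hk : n - (nuSet g).card ≤ k
    · exact ih g hk
    · have hcard : (nuSet g).card < n := by omega
      obtain ⟨t, htrefl, htcard⟩ := exists_step g hcard
      obtain ⟨L', hL'refl, hL'prod, hL'len⟩ := ih (g * t) (by omega)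
      refine ⟨L' ++ [t⁻¹], ?_, ?_, ?_⟩
      · intro s hs
        rcases List.mem_append.mp hs with h | h
        · exact hL'refl s h
        · rw [List.mem_singleton.mp h]
          exact isReflection_inv htrefl
      · rw [List.prod_append, List.prod_cons, List.prod_nil, mul_one, hL'prod,
          mul_inv_cancel_right]
      · rw [List.length_append, List.length_singleton]
        omega


end WPL
end Auxiliary

open scoped Classical in
/-- In `G(m,1,n)`, the reflection length of `g` equals `n` minus the number of cycles of
`g` of weight `0` (a cycle is counted via its minimal element). -/
theorem reflection_length_Gm1n (m n : ℕ) (hm : 0 < m) (g : WP m n) :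
    sInf {l : ℕ | ∃ L : List (WP m n),
        L.length = l ∧ (∀ t ∈ L, IsReflection t) ∧ L.prod = g} =
      n - (Finset.univ.filter (fun x : Fin n =>
        (∀ y : Fin n, g.perm.SameCycle x y → x ≤ y) ∧
        (∑ y ∈ Finset.univ.filter (fun y : Fin n => g.perm.SameCycle x y), g.wt y) = 0)).card := by
  show sInf {l : ℕ | ∃ L : List (WP m n),
        L.length = l ∧ (∀ t ∈ L, IsReflection t) ∧ L.prod = g} = n - (WPL.nuSet g).card
  obtain ⟨L, hLrefl, hLprod, hLlen⟩ := WPL.upper_bound n g (Nat.sub_le _ _)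
  have hmem : L.length ∈ {l : ℕ | ∃ L : List (WP m n),
      L.length = l ∧ (∀ t ∈ L, IsReflection t) ∧ L.prod = g} := ⟨L, rfl, hLrefl, hLprod⟩
  have hlow : ∀ l ∈ {l : ℕ | ∃ L : List (WP m n),
      L.length = l ∧ (∀ t ∈ L, IsReflection t) ∧ L.prod = g},
      n - (WPL.nuSet g).card ≤ l := by
    rintro l ⟨L', hlen, hrefl, hprod⟩
    have hζ : IsPrimitiveRoot (Complex.exp (2 * Real.pi * Complex.I / m)) m :=
      Complex.isPrimitiveRoot_exp m hm.ne'
    have h1 := WPL.lower_list hm hζ.pow_eq_one L' hrefl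
    rw [hprod, hlen] at h1
    have h2 := WPL.finrank_fixS_le hm hζ g
    omega
  apply le_antisymm
  · calc sInf {l : ℕ | ∃ L : List (WP m n),
        L.length = l ∧ (∀ t ∈ L, IsReflection t) ∧ L.prod = g}
        ≤ L.length := Nat.sInf_le hmem
      _ ≤ n - (WPL.nuSet g).card := by omega
  · exact le_csInf ⟨L.length, hmem⟩ hlow
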